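/- If Δ is a vertex-decomposable simplicial complex, then all facets of Δ have dimension at least the depth of Δ; in fact, the depth of Δ equals the minimum dimension of a facet of Δ (Δ has facet depth). -/

import Mathlib

open Finset

/-- A (finite, abstract) simplicial complex: a nonempty collection of finite
sets closed under taking subsets. -/
def IsComplex {α : Type} [DecidableEq α] (Δ : Finset (Finset α)) : Prop :=
  Δ.Nonempty ∧ ∀ A ∈ Δ, ∀ B ⊆ A, B ∈ Δ

/-- The link of a face `S` in `Δ`. -/
def link {α : Type} [DecidableEq α] (Δ : Finset (Finset α)) (S : Finset α) :
    Finset (Finset α) :=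
  Δ.filter fun F => Disjoint F S ∧ F ∪ S ∈ Δ

/-- The deletion of a vertex `v` from `Δ`. -/
def del {α : Type} [DecidableEq α] (Δ : Finset (Finset α)) (v : α) :
    Finset (Finset α) :=
  Δ.filter fun F => v ∉ F

/-- The dimension of a simplicial complex, as an integer (`-1` for `{∅}`). -/
def dimC {α : Type} (Δ : Finset (Finset α)) : ℤ := ((Δ.sup Finset.card : ℕ) : ℤ) - 1

/-- A facet: a maximal face. -/
def IsFacet {α : Type} (Δ : Finset (Finset α)) (A : Finset α) : Prop :=
  A ∈ Δ ∧ ∀ B ∈ Δ, A ⊆ B → B = A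

/-- The simplicial boundary of a basis element: `∂A = ∑_{a ∈ A} (-1)^{pos(a)} (A \ {a})`,
where `pos(a)` is the position of `a` in the increasing ordering of `A`. -/
noncomputable def bdElt {α : Type} [LinearOrder α] (F : Type) [Field F]
    (A : Finset α) : Finset α →₀ F :=
  ∑ a ∈ A, ((-1 : F) ^ (A.filter (· < a)).card) • Finsupp.single (A.erase a) (1 : F)

/-- The boundary operator on (augmented) simplicial chains, where the chain in
cardinality `k` is spanned by the `k`-element sets (in particular the empty set
spans the augmentation degree). -/
noncomputable def bd {α : Type} [LinearOrder α] (F : Type) [Field F] :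
    (Finset α →₀ F) →ₗ[F] (Finset α →₀ F) :=
  Finsupp.lsum F fun A => LinearMap.toSpanSingleton F (Finset α →₀ F) (bdElt F A)

/-- Vanishing of the reduced simplicial homology `H̃_i(Δ; F)`: every reduced
cycle supported on `(i+1)`-element faces of `Δ` is the boundary of a chain
supported on `(i+2)`-element faces of `Δ`. -/
def HomologyVanishes {α : Type} [LinearOrder α] (F : Type) [Field F]
    (Δ : Finset (Finset α)) (i : ℤ) : Prop :=
  ∀ x : Finset α →₀ F, (∀ A ∈ x.support, A ∈ Δ ∧ (A.card : ℤ) = i + 1) →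
    bd F x = 0 →
    ∃ y : Finset α →₀ F, (∀ A ∈ y.support, A ∈ Δ ∧ (A.card : ℤ) = i + 2) ∧
      bd F y = x

/-- `Δ` is Cohen–Macaulay over `F`: for every face `A` and every
`i < dim link(Δ, A)`, the reduced homology `H̃_i(link(Δ,A); F)` vanishes. -/
def IsCM {α : Type} [LinearOrder α] (F : Type) [Field F]
    (Δ : Finset (Finset α)) : Prop :=
  ∀ A ∈ Δ, ∀ i : ℤ, i < dimC (link Δ A) → HomologyVanishes F (link Δ A) i

/-- The `d`-dimensional skeleton of `Δ`: all faces of dimension at most `d`. -/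
def skeleton {α : Type} (Δ : Finset (Finset α)) (d : ℤ) : Finset (Finset α) :=
  Δ.filter fun A => (A.card : ℤ) ≤ d + 1

/-- The depth of `Δ` over `F`: the largest `d` such that the `d`-dimensional
skeleton of `Δ` is Cohen–Macaulay over `F`. -/
noncomputable def depthC {α : Type} [LinearOrder α] (F : Type) [Field F]
    (Δ : Finset (Finset α)) : ℤ :=
  sSup {d : ℤ | d ≤ dimC Δ ∧ IsCM F (skeleton Δ d)}

/-- Vertex-decomposability: `Δ` is a simplex, or has a shedding vertex `v`
(every face containing `v` admits an exchange) whose deletion and link are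
both vertex-decomposable. -/
inductive VertexDecomposable {α : Type} [DecidableEq α] :
    Finset (Finset α) → Prop
  | simplex (A : Finset α) : VertexDecomposable A.powerset
  | shed (Δ : Finset (Finset α)) (v : α)
      (hshed : ∀ A ∈ Δ, v ∈ A → ∃ w, w ≠ v ∧ w ∉ A ∧ insert w (A.erase v) ∈ Δ)
      (hdel : VertexDecomposable (del Δ v))
      (hlink : VertexDecomposable (link Δ {v})) :
      VertexDecomposable Δ

namespace VDaux

variable {α : Type} [LinearOrder α] (F : Type) [Field F]

/-- sign of a vertex in a set -/
noncomputable def sg (A : Finset α) (a : α) : F := (-1 : F) ^ (A.filter (· < a)).card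

lemma bdElt_def (A : Finset α) :
    bdElt F A = ∑ a ∈ A, sg F A a • Finsupp.single (A.erase a) (1 : F) := rfl

noncomputable def coneElt (v : α) (B : Finset α) : Finset α →₀ F :=
  if v ∈ B then 0 else sg F B v • Finsupp.single (insert v B) (1 : F)

noncomputable def coneMap (v : α) : (Finset α →₀ F) →ₗ[F] (Finset α →₀ F) :=
  Finsupp.lsum F fun B => LinearMap.toSpanSingleton F (Finset α →₀ F) (coneElt F v B)

noncomputable def dropElt (v : α) (B : Finset α) : Finset α →₀ F :=
  if v ∈ B then sg F B v • Finsupp.single (B.erase v) (1 : F) else 0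

noncomputable def dropMap (v : α) : (Finset α →₀ F) →ₗ[F] (Finset α →₀ F) :=
  Finsupp.lsum F fun B => LinearMap.toSpanSingleton F (Finset α →₀ F) (dropElt F v B)

lemma bd_single (A : Finset α) (r : F) :
    bd F (Finsupp.single A r) = r • bdElt F A := by
  rw [bd, Finsupp.lsum_single, LinearMap.toSpanSingleton_apply]

lemma cone_single (v : α) (B : Finset α) (r : F) :
    coneMap F v (Finsupp.single B r) = r • coneElt F v B := by
  rw [coneMap, Finsupp.lsum_single, LinearMap.toSpanSingleton_apply]

lemma drop_single (v : α) (B : Finset α) (r : F) :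
    dropMap F v (Finsupp.single B r) = r • dropElt F v B := by
  rw [dropMap, Finsupp.lsum_single, LinearMap.toSpanSingleton_apply]

lemma bd_apply (x : Finset α →₀ F) :
    bd F x = ∑ A ∈ x.support, x A • bdElt F A := by
  rw [bd, Finsupp.lsum_apply]
  rfl

lemma cone_apply (v : α) (x : Finset α →₀ F) :
    coneMap F v x = ∑ A ∈ x.support, x A • coneElt F v A := by
  rw [coneMap, Finsupp.lsum_apply]
  rfl

lemma drop_apply (v : α) (x : Finset α →₀ F) :
    dropMap F v x = ∑ A ∈ x.support, x A • dropElt F v A := by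
  rw [dropMap, Finsupp.lsum_apply]
  rfl

/-! ### sign computations -/

lemma sg_insert_self (v : α) (B : Finset α) : sg F (insert v B) v = sg F B v := by
  unfold sg
  rw [filter_insert, if_neg (lt_irrefl v)]

lemma sg_erase_self (v : α) (B : Finset α) : sg F (B.erase v) v = sg F B v := by
  unfold sg
  rw [filter_erase]
  congr 1
  rw [erase_eq_of_notMem]
  simp

lemma sg_mul_self (A : Finset α) (a : α) : sg F A a * sg F A a = 1 := by
  unfold sg
  rw [← mul_pow]
  norm_num

/-! ### the chain homotopy -/

lemma cone_single_one (v : α) (B : Finset α) :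
    coneMap F v (Finsupp.single B (1 : F)) = coneElt F v B := by
  rw [cone_single, one_smul]

lemma bd_coneElt (v : α) (B : Finset α) :
    bd F (coneElt F v B) + coneMap F v (bdElt F B) = Finsupp.single B (1 : F) := by
  by_cases hv : v ∈ B
  · rw [coneElt, if_pos hv, map_zero, zero_add, bdElt_def, map_sum]
    rw [Finset.sum_eq_single_of_mem v hv]
    · rw [map_smul, cone_single_one, coneElt, if_neg (notMem_erase v B), smul_smul,
        insert_erase hv, sg_erase_self, sg_mul_self, one_smul]
    · intro a ha hav
      rw [map_smul, cone_single_one, coneElt,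
        if_pos (mem_erase.mpr ⟨(Ne.symm hav), hv⟩), smul_zero]
  · have h0 : bd F (coneElt F v B) = sg F B v • bdElt F (insert v B) := by
      rw [coneElt, if_neg hv, map_smul, bd_single, one_smul]
    have h1 : bd F (coneElt F v B) = Finsupp.single B (1:F)
        + ∑ a ∈ B, (sg F B v * sg F (insert v B) a)
            • Finsupp.single ((insert v B).erase a) (1 : F) := by
      rw [h0, bdElt_def, Finset.sum_insert hv, smul_add, erase_insert hv, smul_smul,
        sg_insert_self, sg_mul_self, one_smul, Finset.smul_sum]
      congr 1
      exact Finset.sum_congr rfl fun a _ => by rw [smul_smul]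
    have h2 : coneMap F v (bdElt F B) = ∑ a ∈ B, sg F B a • coneElt F v (B.erase a) := by
      rw [bdElt_def, map_sum]
      exact Finset.sum_congr rfl fun a _ => by rw [map_smul, cone_single_one]
    rw [h1, h2, add_assoc, ← Finset.sum_add_distrib]
    have hrw : ∀ a ∈ B,
        (sg F B v * sg F (insert v B) a) • Finsupp.single ((insert v B).erase a) (1 : F)
          + sg F B a • coneElt F v (B.erase a) = 0 := by
      intro a ha
      have hav : a ≠ v := fun h => hv (h ▸ ha)
      have hvB : v ∉ B.erase a := fun h => hv (mem_of_mem_erase h)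
      rw [coneElt, if_neg hvB, smul_smul, ← erase_insert_of_ne (Ne.symm hav)]
      rw [← add_smul]
      convert zero_smul F _
      -- coefficient identity
      unfold sg
      rcases lt_or_gt_of_ne hav with hlt | hgt
      · -- a < v
        have h1 : (insert v B).filter (· < a) = B.filter (· < a) := by
          rw [filter_insert, if_neg (by exact fun h => absurd (lt_trans hlt h) (lt_irrefl a))]
        have h2 : (B.erase a).filter (· < v) = (B.filter (· < v)).erase a := filter_erase _ _ _
        have hmem : a ∈ B.filter (· < v) := mem_filter.mpr ⟨ha, hlt⟩
        have hc : 1 ≤ (B.filter (· < v)).card := card_pos.mpr ⟨a, hmem⟩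
        obtain ⟨c, hc'⟩ : ∃ c, (B.filter (· < v)).card = c + 1 := ⟨(B.filter (· < v)).card - 1, by omega⟩
        rw [h1, h2, card_erase_of_mem hmem, hc']
        simp only [Nat.add_sub_cancel]
        ring
      · -- v < a
        have h1 : (insert v B).filter (· < a) = insert v (B.filter (· < a)) := by
          rw [filter_insert, if_pos hgt]
        have hvf : v ∉ B.filter (· < a) := fun h => hv (Finset.mem_of_mem_filter v h)
        have h2 : (B.erase a).filter (· < v) = (B.filter (· < v)).erase a := filter_erase _ _ _
        have hnm : a ∉ B.filter (· < v) := by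
          intro h
          exact absurd (mem_filter.mp h).2 (not_lt_of_gt hgt)
        rw [h1, h2, card_insert_of_notMem hvf, erase_eq_of_notMem hnm, pow_succ]
        ring
    rw [Finset.sum_congr rfl hrw, Finset.sum_const_zero, add_zero]

theorem bd_cone (v : α) (x : Finset α →₀ F) :
    bd F (coneMap F v x) + coneMap F v (bd F x) = x := by
  induction x using Finsupp.induction_linear with
  | zero => simp
  | add f g hf hg =>
      rw [map_add, map_add, map_add, map_add]
      calc _ = (bd F (coneMap F v f) + coneMap F v (bd F f))
            + (bd F (coneMap F v g) + coneMap F v (bd F g)) := by abel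
        _ = f + g := by rw [hf, hg]
  | single A b =>
      rw [cone_single, bd_single, map_smul, map_smul, ← smul_add, bd_coneElt,
        Finsupp.smul_single_one]

lemma drop_coneElt (v : α) (B : Finset α) (hv : v ∉ B) :
    dropMap F v (coneElt F v B) = Finsupp.single B (1 : F) := by
  rw [coneElt, if_neg hv, map_smul, drop_single, one_smul, dropElt,
    if_pos (mem_insert_self v B), smul_smul, sg_insert_self, sg_mul_self, one_smul,
    erase_insert hv]

lemma cone_dropElt (v : α) (B : Finset α) (hv : v ∈ B) :
    coneMap F v (dropElt F v B) = Finsupp.single B (1 : F) := by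
  rw [dropElt, if_pos hv, map_smul, cone_single_one, coneElt, if_neg (notMem_erase v B),
    smul_smul, sg_erase_self, sg_mul_self, one_smul, insert_erase hv]

lemma drop_vfree (v : α) (x : Finset α →₀ F) (h : ∀ B ∈ x.support, v ∉ B) :
    dropMap F v x = 0 := by
  rw [drop_apply]
  refine Finset.sum_eq_zero fun B hB => ?_
  rw [dropElt, if_neg (h B hB), smul_zero]

lemma drop_cone_vfree (v : α) (x : Finset α →₀ F) (h : ∀ B ∈ x.support, v ∉ B) :
    dropMap F v (coneMap F v x) = x := by
  conv_rhs => rw [← Finsupp.sum_single x]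
  rw [cone_apply, map_sum, Finsupp.sum]
  refine Finset.sum_congr rfl fun B hB => ?_
  rw [map_smul, drop_coneElt F v B (h B hB), Finsupp.smul_single_one]

lemma cone_drop_vfull (v : α) (x : Finset α →₀ F) (h : ∀ B ∈ x.support, v ∈ B) :
    coneMap F v (dropMap F v x) = x := by
  conv_rhs => rw [← Finsupp.sum_single x]
  rw [drop_apply, map_sum, Finsupp.sum]
  refine Finset.sum_congr rfl fun B hB => ?_
  rw [map_smul, cone_dropElt F v B (h B hB), Finsupp.smul_single_one]

/-! ### support lemmas -/

lemma support_bdElt (A : Finset α) :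
    ∀ C ∈ (bdElt F A).support, ∃ a ∈ A, C = A.erase a := by
  intro C hC
  rw [bdElt_def] at hC
  have := Finsupp.support_finset_sum hC
  rw [Finset.mem_biUnion] at this
  obtain ⟨a, ha, hC'⟩ := this
  have := Finsupp.support_single_subset (Finsupp.support_smul hC')
  rw [Finset.mem_singleton] at this
  exact ⟨a, ha, this⟩

lemma support_bd (x : Finset α →₀ F) :
    ∀ C ∈ (bd F x).support, ∃ A ∈ x.support, ∃ a ∈ A, C = A.erase a := by
  intro C hC
  rw [bd_apply] at hC
  have := Finsupp.support_finset_sum hC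
  rw [Finset.mem_biUnion] at this
  obtain ⟨A, hA, hC'⟩ := this
  exact ⟨A, hA, support_bdElt F A C (Finsupp.support_smul hC')⟩

lemma support_cone (v : α) (x : Finset α →₀ F) :
    ∀ C ∈ (coneMap F v x).support, ∃ B ∈ x.support, v ∉ B ∧ C = insert v B := by
  intro C hC
  rw [cone_apply] at hC
  have := Finsupp.support_finset_sum hC
  rw [Finset.mem_biUnion] at this
  obtain ⟨B, hB, hC'⟩ := this
  have hC'' := Finsupp.support_smul hC'
  rw [coneElt] at hC''
  by_cases hv : v ∈ B
  · rw [if_pos hv] at hC''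
    simp at hC''
  · rw [if_neg hv] at hC''
    have := Finsupp.support_single_subset (Finsupp.support_smul hC'')
    rw [Finset.mem_singleton] at this
    exact ⟨B, hB, hv, this⟩

lemma support_drop (v : α) (x : Finset α →₀ F) :
    ∀ C ∈ (dropMap F v x).support, ∃ B ∈ x.support, v ∈ B ∧ C = B.erase v := by
  intro C hC
  rw [drop_apply] at hC
  have := Finsupp.support_finset_sum hC
  rw [Finset.mem_biUnion] at this
  obtain ⟨B, hB, hC'⟩ := this
  have hC'' := Finsupp.support_smul hC'
  rw [dropElt] at hC''
  by_cases hv : v ∈ B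
  · rw [if_pos hv] at hC''
    have := Finsupp.support_single_subset (Finsupp.support_smul hC'')
    rw [Finset.mem_singleton] at this
    exact ⟨B, hB, hv, this⟩
  · rw [if_neg hv] at hC''
    simp at hC''

/-! ### complex combinatorics -/

variable {Δ Γ : Finset (Finset α)}

lemma empty_mem (hΔ : IsComplex Δ) : ∅ ∈ Δ := by
  obtain ⟨⟨A, hA⟩, hcl⟩ := hΔ
  exact hcl A hA ∅ (Finset.empty_subset A)

lemma mem_link {S A : Finset α} : A ∈ link Δ S ↔ A ∈ Δ ∧ Disjoint A S ∧ A ∪ S ∈ Δ := by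
  rw [link, mem_filter]

lemma mem_del {v : α} {A : Finset α} : A ∈ del Δ v ↔ A ∈ Δ ∧ v ∉ A := by
  rw [del, mem_filter]

lemma complex_link (hΔ : IsComplex Δ) {S : Finset α} (hS : S ∈ Δ) : IsComplex (link Δ S) := by
  constructor
  · exact ⟨∅, mem_link.mpr ⟨empty_mem hΔ, disjoint_empty_left S, by rwa [Finset.empty_union]⟩⟩
  · intro A hA B hBA
    rw [mem_link] at hA ⊢
    exact ⟨hΔ.2 A hA.1 B hBA, disjoint_of_subset_left hBA hA.2.1,
      hΔ.2 _ hA.2.2 _ (Finset.union_subset_union_left hBA)⟩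

lemma complex_del (hΔ : IsComplex Δ) (v : α) : IsComplex (del Δ v) := by
  constructor
  · exact ⟨∅, mem_del.mpr ⟨empty_mem hΔ, Finset.notMem_empty v⟩⟩
  · intro A hA B hBA
    rw [mem_del] at hA ⊢
    exact ⟨hΔ.2 A hA.1 B hBA, fun h => hA.2 (hBA h)⟩

lemma link_empty : link Δ ∅ = Δ := by
  ext A
  rw [mem_link]
  simp

lemma link_link (hΔ : IsComplex Δ) {S A : Finset α} (hd : Disjoint A S) :
    link (link Δ S) A = link Δ (S ∪ A) := by
  ext G
  rw [mem_link, mem_link, mem_link, mem_link]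
  constructor
  · rintro ⟨⟨hG, hGS, hGuS⟩, hGA, hGA2, hGAS, hGAuS⟩
    refine ⟨hG, ?_, ?_⟩
    · rw [Finset.disjoint_union_right]
      exact ⟨hGS, hGA⟩
    · have : G ∪ (S ∪ A) = G ∪ A ∪ S := by
        rw [Finset.union_comm S A, Finset.union_assoc]
      rwa [this]
  · rintro ⟨hG, hd2, hGSA⟩
    rw [Finset.disjoint_union_right] at hd2
    refine ⟨⟨hG, hd2.1, hΔ.2 _ hGSA _ ?_⟩, hd2.2, ⟨hΔ.2 _ hGSA _ ?_, ?_, ?_⟩⟩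
    · exact Finset.union_subset_union_right Finset.subset_union_left
    · intro x hx
      rw [Finset.mem_union] at hx
      rcases hx with h | h
      · exact Finset.mem_union_left _ h
      · exact Finset.mem_union_right _ (Finset.mem_union_right _ h)
    · rw [Finset.disjoint_union_left]
      exact ⟨hd2.1, hd⟩
    · have : G ∪ A ∪ S = G ∪ (S ∪ A) := by
        rw [Finset.union_assoc, Finset.union_comm A S]
      rwa [this]

lemma exists_facet_above {A : Finset α} (hA : A ∈ Δ) : ∃ B, IsFacet Δ B ∧ A ⊆ B := by
  classical
  have hne : (Δ.filter fun B => A ⊆ B).Nonempty := ⟨A, mem_filter.mpr ⟨hA, subset_rfl⟩⟩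
  obtain ⟨B, hB, hmax⟩ := Finset.exists_max_image _ Finset.card hne
  rw [mem_filter] at hB
  refine ⟨B, ⟨hB.1, fun C hC hBC => ?_⟩, hB.2⟩
  have hC' : C ∈ Δ.filter fun B => A ⊆ B := mem_filter.mpr ⟨hC, hB.2.trans hBC⟩
  exact (Finset.eq_of_subset_of_card_le hBC (hmax C hC')).symm

lemma sup_attained (h : Δ.Nonempty) : ∃ A ∈ Δ, A.card = Δ.sup Finset.card := by
  obtain ⟨A, hA, hs⟩ := Finset.exists_mem_eq_sup Δ h Finset.card
  exact ⟨A, hA, hs.symm⟩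

/-! ### easy homology lemmas -/

lemma hv_neg (Γ : Finset (Finset α)) (i : ℤ) (hi : i ≤ -2) : HomologyVanishes F Γ i := by
  intro x hx hbd
  have hsupp : x.support = ∅ := by
    rw [Finset.eq_empty_iff_forall_notMem]
    intro A hA
    have := (hx A hA).2
    have hc : (0 : ℤ) ≤ (A.card : ℤ) := Int.natCast_nonneg _
    omega
  have hx0 : x = 0 := Finsupp.support_eq_empty.mp hsupp
  exact ⟨0, by simp, by rw [map_zero, hx0]⟩

lemma hv_cone (Γ : Finset (Finset α)) (v : α) (hc : ∀ B ∈ Γ, insert v B ∈ Γ) (i : ℤ) :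
    HomologyVanishes F Γ i := by
  intro x hx hbd
  refine ⟨coneMap F v x, ?_, ?_⟩
  · intro C hC
    obtain ⟨B, hB, hvB, rfl⟩ := support_cone F v x C hC
    obtain ⟨hBΓ, hBc⟩ := hx B hB
    refine ⟨hc B hBΓ, ?_⟩
    rw [card_insert_of_notMem hvB]
    push_cast
    omega
  · have := bd_cone F v x
    rwa [hbd, map_zero, add_zero] at this

lemma cm_powerset (A : Finset α) : IsCM F A.powerset := by
  intro S hS i hi
  rw [Finset.mem_powerset] at hS
  have hlink : link A.powerset S = (A \ S).powerset := by
    ext G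
    rw [mem_link, Finset.mem_powerset, Finset.mem_powerset, Finset.mem_powerset]
    constructor
    · rintro ⟨hG, hd, _⟩
      intro x hx
      rw [Finset.mem_sdiff]
      exact ⟨hG hx, fun h => (Finset.disjoint_left.mp hd) hx h⟩
    · intro h
      have h1 : G ⊆ A := h.trans (Finset.sdiff_subset)
      have h2 : Disjoint G S := by
        rw [Finset.disjoint_left]
        intro x hx hxS
        exact (Finset.mem_sdiff.mp (h hx)).2 hxS
      exact ⟨h1, h2, Finset.union_subset h1 hS⟩
  rw [hlink] at hi ⊢
  rcases Finset.eq_empty_or_nonempty (A \ S) with he | ⟨v, hv⟩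
  · rw [he] at hi ⊢
    have : dimC (∅ : Finset α).powerset = -1 := by
      rw [dimC, Finset.powerset_empty, Finset.sup_singleton]
      simp
    rw [this] at hi
    exact hv_neg F _ i (by omega)
  · refine hv_cone F _ v (fun B hB => ?_) i
    rw [Finset.mem_powerset] at hB ⊢
    exact Finset.insert_subset hv hB

/-! ### purity -/

def Pure (Γ : Finset (Finset α)) : Prop :=
  ∀ B, IsFacet Γ B → B.card = Γ.sup Finset.card

lemma facet_card_le {B : Finset α} (hB : B ∈ Γ) : B.card ≤ Γ.sup Finset.card :=
  Finset.le_sup hB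

lemma link_facet_facet (hΓ : IsComplex Γ) {A G : Finset α} (hA : A ∈ Γ)
    (hG : IsFacet (link Γ A) G) : IsFacet Γ (G ∪ A) := by
  obtain ⟨hGm, hGmax⟩ := hG
  rw [mem_link] at hGm
  refine ⟨hGm.2.2, fun B hB hsub => ?_⟩
  have hBA : B \ A ∈ link Γ A := by
    rw [mem_link]
    refine ⟨hΓ.2 B hB _ (Finset.sdiff_subset), Finset.sdiff_disjoint, ?_⟩
    rwa [Finset.sdiff_union_self_eq_union, Finset.union_eq_left.mpr
      ((Finset.subset_union_right).trans hsub)]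
  have hGsub : G ⊆ B \ A := by
    intro x hx
    rw [Finset.mem_sdiff]
    exact ⟨hsub (Finset.mem_union_left _ hx), fun h =>
      (Finset.disjoint_left.mp hGm.2.1) hx h⟩
  have := hGmax _ hBA hGsub
  have hAB : A ⊆ B := (Finset.subset_union_right).trans hsub
  rw [← this, Finset.sdiff_union_self_eq_union, Finset.union_eq_left.mpr hAB]

lemma facet_sdiff_link {A B : Finset α} (hB : IsFacet Γ B) (hAB : A ⊆ B)
    (hΓ : IsComplex Γ) : IsFacet (link Γ A) (B \ A) := by
  refine ⟨?_, fun C hC hsub => ?_⟩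
  · rw [mem_link]
    refine ⟨hΓ.2 B hB.1 _ Finset.sdiff_subset, Finset.sdiff_disjoint, ?_⟩
    rw [Finset.sdiff_union_self_eq_union, Finset.union_eq_left.mpr hAB]
    exact hB.1
  · rw [mem_link] at hC
    have hsub2 : B ⊆ C ∪ A := by
      intro x hx
      by_cases hxA : x ∈ A
      · exact Finset.mem_union_right _ hxA
      · exact Finset.mem_union_left _ (hsub (Finset.mem_sdiff.mpr ⟨hx, hxA⟩))
    have heq := hB.2 _ hC.2.2 hsub2
    have hC2 : C = (C ∪ A) \ A := by
      rw [Finset.union_sdiff_right, Finset.sdiff_eq_self_iff_disjoint.mpr hC.2.1]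
    rw [hC2, heq]

lemma card_facet_link {A : Finset α} (hΓ : IsComplex Γ) (hp : Pure Γ) (hA : A ∈ Γ) :
    ∀ G, IsFacet (link Γ A) G → G.card + A.card = Γ.sup Finset.card := by
  intro G hG
  have hf := link_facet_facet hΓ hA hG
  have hd : Disjoint G A := (mem_link.mp hG.1).2.1
  have := hp _ hf
  rwa [Finset.card_union_of_disjoint hd] at this

lemma sup_card_link {A : Finset α} (hΓ : IsComplex Γ) (hp : Pure Γ) (hA : A ∈ Γ) :
    (link Γ A).sup Finset.card + A.card = Γ.sup Finset.card := by
  have hle : ∀ G ∈ link Γ A, G.card + A.card ≤ Γ.sup Finset.card := by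
    intro G hG
    rw [mem_link] at hG
    have hd := hG.2.1
    have := facet_card_le (Γ := Γ) hG.2.2
    rwa [Finset.card_union_of_disjoint hd] at this
  obtain ⟨G, hGf, _⟩ := exists_facet_above (empty_mem (complex_link hΓ hA))
  have h1 := card_facet_link hΓ hp hA G hGf
  have h2 : G.card ≤ (link Γ A).sup Finset.card := facet_card_le hGf.1
  have h3 : ∀ c ∈ (link Γ A).image Finset.card, c + A.card ≤ Γ.sup Finset.card := by
    intro c hc
    obtain ⟨G', hG', rfl⟩ := Finset.mem_image.mp hc
    exact hle G' hG'
  have h4 : (link Γ A).sup Finset.card + A.card ≤ Γ.sup Finset.card := by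
    obtain ⟨G', hG', hs⟩ := sup_attained ((complex_link hΓ hA).1)
    rw [← hs]
    exact hle G' hG'
  omega

lemma pure_link {A : Finset α} (hΓ : IsComplex Γ) (hp : Pure Γ) (hA : A ∈ Γ) :
    Pure (link Γ A) := by
  intro G hG
  have h1 := card_facet_link hΓ hp hA G hG
  have h2 := sup_card_link hΓ hp hA
  omega

lemma dim_link {A : Finset α} (hΓ : IsComplex Γ) (hp : Pure Γ) (hA : A ∈ Γ) :
    dimC (link Γ A) = ((Γ.sup Finset.card : ℕ) : ℤ) - (A.card : ℕ) - 1 := by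
  have := sup_card_link hΓ hp hA
  rw [dimC]
  push_cast
  omega

lemma isCM_link (hΓ : IsComplex Γ) (hcm : IsCM F Γ) {S : Finset α} (hS : S ∈ Γ) :
    IsCM F (link Γ S) := by
  intro A hA i hi
  have hd : Disjoint A S := (mem_link.mp hA).2.1
  rw [link_link hΓ hd] at hi ⊢
  have hSA : S ∪ A ∈ Γ := by
    rw [Finset.union_comm]
    exact (mem_link.mp hA).2.2
  exact hcm (S ∪ A) hSA i hi

/-! ### connectivity -/

def Reach (Γ : Finset (Finset α)) (u w : α) : Prop :=
  Relation.ReflTransGen (fun a b => ({a, b} : Finset α) ∈ Γ) u w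

open Classical in
noncomputable def indic (Γ : Finset (Finset α)) (u : α) (A : Finset α) : F :=
  if ∃ a, A = {a} ∧ Reach Γ u a then 1 else 0

noncomputable def phi (Γ : Finset (Finset α)) (u : α) : (Finset α →₀ F) →ₗ[F] F :=
  Finsupp.lsum F fun A => (indic F Γ u A) • (LinearMap.id : F →ₗ[F] F)

lemma phi_single (Γ : Finset (Finset α)) (u : α) (A : Finset α) (r : F) :
    phi F Γ u (Finsupp.single A r) = indic F Γ u A * r := by
  rw [phi, Finsupp.lsum_single]
  simp [smul_eq_mul]

open Classical in
lemma indic_singleton (Γ : Finset (Finset α)) (u c : α) :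
    indic F Γ u ({c} : Finset α) = if Reach Γ u c then 1 else 0 := by
  classical
  by_cases h : Reach Γ u c
  · rw [if_pos h, indic, if_pos ⟨c, rfl, h⟩]
  · rw [if_neg h, indic, if_neg]
    rintro ⟨a, ha, hr⟩
    rw [Finset.singleton_inj] at ha
    exact h (ha ▸ hr)

lemma bdElt_singleton (a : α) : bdElt F ({a} : Finset α) = Finsupp.single ∅ (1 : F) := by
  rw [bdElt_def, Finset.sum_singleton, Finset.erase_singleton]
  have : sg F ({a} : Finset α) a = 1 := by
    rw [sg, Finset.filter_singleton, if_neg (lt_irrefl a)]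
    simp
  rw [this, one_smul]

lemma bdElt_pair {a b : α} (hab : a < b) :
    bdElt F ({a, b} : Finset α) =
      Finsupp.single {b} (1 : F) - Finsupp.single {a} (1 : F) := by
  have hne : a ≠ b := ne_of_lt hab
  have hnm : a ∉ ({b} : Finset α) := by simp [hne]
  rw [bdElt_def, Finset.sum_pair hne]
  have e1 : ({a, b} : Finset α).erase a = {b} := by
    rw [show ({a, b} : Finset α) = insert a {b} from rfl, erase_insert hnm]
  have e2 : ({a, b} : Finset α).erase b = {a} := by
    rw [show ({a, b} : Finset α) = insert a {b} from rfl, erase_insert_of_ne hne,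
      Finset.erase_singleton]
    rfl
  have s1 : sg F ({a, b} : Finset α) a = 1 := by
    rw [sg]
    have : ({a, b} : Finset α).filter (· < a) = ∅ := by
      rw [Finset.eq_empty_iff_forall_notMem]
      intro x hx
      rw [Finset.mem_filter, Finset.mem_insert, Finset.mem_singleton] at hx
      rcases hx.1 with rfl | rfl
      · exact absurd hx.2 (lt_irrefl x)
      · exact absurd (lt_trans hab hx.2) (lt_irrefl a)
    rw [this]
    simp
  have s2 : sg F ({a, b} : Finset α) b = -1 := by
    rw [sg]
    have : ({a, b} : Finset α).filter (· < b) = {a} := by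
      ext x
      rw [Finset.mem_filter, Finset.mem_insert, Finset.mem_singleton, Finset.mem_singleton]
      constructor
      · rintro ⟨rfl | rfl, h2⟩
        · rfl
        · exact absurd h2 (lt_irrefl x)
      · rintro rfl
        exact ⟨Or.inl rfl, hab⟩
    rw [this]
    simp
  rw [e1, e2, s1, s2, one_smul]
  rw [neg_smul, one_smul, sub_eq_add_neg]

lemma reach_of_edge {a b : α} (h : ({a, b} : Finset α) ∈ Γ) {u : α} :
    Reach Γ u a ↔ Reach Γ u b := by
  constructor
  · intro hr
    exact Relation.ReflTransGen.tail hr h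
  · intro hr
    refine Relation.ReflTransGen.tail hr ?_
    rwa [Finset.pair_comm]

lemma connectivity (h0 : HomologyVanishes F Γ 0) {u w : α}
    (hu : ({u} : Finset α) ∈ Γ) (hw : ({w} : Finset α) ∈ Γ) : Reach Γ u w := by
  classical
  by_cases huw : u = w
  · exact huw ▸ Relation.ReflTransGen.refl
  · set x : Finset α →₀ F := Finsupp.single {u} 1 - Finsupp.single {w} 1 with hx
    have hsupp : ∀ A ∈ x.support, A ∈ Γ ∧ (A.card : ℤ) = 0 + 1 := by
      intro A hA
      have := Finsupp.support_sub hA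
      rw [Finset.mem_union] at this
      rcases this with h | h
      · have := Finsupp.support_single_subset h
        rw [Finset.mem_singleton] at this
        subst this
        simpa using hu
      · have := Finsupp.support_single_subset h
        rw [Finset.mem_singleton] at this
        subst this
        simpa using hw
    have hbd : bd F x = 0 := by
      rw [hx, map_sub, bd_single, bd_single, one_smul, one_smul,
        bdElt_singleton, bdElt_singleton, sub_self]
    obtain ⟨y, hy, hbdy⟩ := h0 x hsupp hbd
    have hphibd : phi F Γ u (bd F y) = 0 := by
      rw [bd_apply, map_sum]
      refine Finset.sum_eq_zero fun A hA => ?_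
      obtain ⟨hAΓ, hAc⟩ := hy A hA
      have hc2 : A.card = 2 := by omega
      obtain ⟨a, b, hab, rfl⟩ := Finset.card_eq_two.mp hc2
      rcases lt_or_gt_of_ne hab with hlt | hgt
      · rw [map_smul, bdElt_pair F hlt, map_sub, phi_single, phi_single,
          indic_singleton, indic_singleton]
        have : Reach Γ u a ↔ Reach Γ u b := reach_of_edge hAΓ
        by_cases hr : Reach Γ u a
        · rw [if_pos hr, if_pos (this.mp hr)]
          simp
        · rw [if_neg hr, if_neg (fun h => hr (this.mpr h))]
          simp
      · have hsw : ({a, b} : Finset α) = {b, a} := Finset.pair_comm a b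
        rw [map_smul, hsw, bdElt_pair F hgt, map_sub, phi_single, phi_single,
          indic_singleton, indic_singleton]
        have : Reach Γ u a ↔ Reach Γ u b := reach_of_edge hAΓ
        by_cases hr : Reach Γ u a
        · rw [if_pos hr, if_pos (this.mp hr)]
          simp
        · rw [if_neg hr, if_neg (fun h => hr (this.mpr h))]
          simp
    rw [hbdy] at hphibd
    rw [hx, map_sub, phi_single, phi_single, indic_singleton, indic_singleton,
      if_pos (show Reach Γ u u from Relation.ReflTransGen.refl)] at hphibd
    by_cases hr : Reach Γ u w
    · exact hr
    · rw [if_neg hr] at hphibd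
      simp at hphibd

/-! ### CM implies pure -/

theorem cm_pure : ∀ n : ℕ, ∀ Γ : Finset (Finset α),
    Γ.sup Finset.card = n → IsComplex Γ → IsCM F Γ → Pure Γ := by
  intro n
  induction n using Nat.strong_induction_on with
  | _ n IH =>
    intro Γ hn hΓ hcm B hB
    rw [hn]
    by_contra hne
    have hBle : B.card ≤ n := hn ▸ facet_card_le hB.1
    have hBlt : B.card < n := lt_of_le_of_ne hBle hne
    -- B is nonempty
    have hBne : B.Nonempty := by
      rcases Finset.eq_empty_or_nonempty B with rfl | h
      · exfalso
        have hall : ∀ C ∈ Γ, C = ∅ := fun C hC => hB.2 C hC (Finset.empty_subset C)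
        have : Γ.sup Finset.card ≤ 0 := Finset.sup_le fun C hC => by
          rw [hall C hC]
          simp
        omega
      · exact h
    obtain ⟨u, huB⟩ := hBne
    have hu : ({u} : Finset α) ∈ Γ := hΓ.2 B hB.1 {u} (Finset.singleton_subset_iff.mpr huB)
    have hn2 : 2 ≤ n := by
      have h1 : 1 ≤ B.card := Finset.card_pos.mpr ⟨u, huB⟩
      omega
    -- local purity at a vertex
    have hloc : ∀ p : α, ({p} : Finset α) ∈ Γ → ∀ C, IsFacet Γ C → p ∈ C →
        C.card = (link Γ {p}).sup Finset.card + 1 := by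
      intro p hp C hC hpC
      have hsub : ({p} : Finset α) ⊆ C := Finset.singleton_subset_iff.mpr hpC
      have hflink : IsFacet (link Γ {p}) (C \ {p}) := facet_sdiff_link hC hsub hΓ
      have hsuplt : (link Γ {p}).sup Finset.card < n := by
        have hle : ∀ G ∈ link Γ {p}, G.card ≤ n - 1 := by
          intro G hG
          rw [mem_link] at hG
          have h1 := facet_card_le (Γ := Γ) hG.2.2
          have h2 : Disjoint G ({p} : Finset α) := hG.2.1
          rw [Finset.card_union_of_disjoint h2, Finset.card_singleton] at h1
          omega
        have := Finset.sup_le hle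
        omega
      have hpure := IH _ hsuplt (link Γ {p}) rfl (complex_link hΓ hp) (isCM_link F hΓ hcm hp)
      have := hpure _ hflink
      have hcd : (C \ {p}).card = C.card - 1 := by
        rw [Finset.card_sdiff_of_subset hsub, Finset.card_singleton]
      have h1 : 1 ≤ C.card := Finset.card_pos.mpr ⟨p, hpC⟩
      omega
    -- connectivity
    have hconn : ∀ w : α, ({w} : Finset α) ∈ Γ → Reach Γ u w := by
      intro w hw
      have hdim : (0 : ℤ) < dimC (link Γ ∅) := by
        rw [link_empty, dimC, hn]
        have : (2 : ℤ) ≤ (n : ℤ) := by exact_mod_cast hn2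
        omega
      exact connectivity F (link_empty (Δ := Γ) ▸ hcm ∅ (empty_mem hΓ) 0 hdim) hu hw
    -- reach invariance of facet cardinality
    have hkey : ∀ w : α, Reach Γ u w → ∀ C, IsFacet Γ C → w ∈ C → C.card = B.card := by
      intro w hreach
      induction hreach with
      | refl =>
          intro C hC huC
          rw [hloc u hu C hC huC, ← hloc u hu B hB huB]
      | @tail b c hub hedge ih =>
          intro C hC hcC
          obtain ⟨E, hE, hsubE⟩ := exists_facet_above hedge
          have hbE : b ∈ E := hsubE (Finset.mem_insert_self b {c})
          have hcE : c ∈ E := hsubE (Finset.mem_insert_of_mem (Finset.mem_singleton_self c))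
          have h1 : E.card = B.card := ih E hE hbE
          have hc1 : ({c} : Finset α) ∈ Γ :=
            hΓ.2 E hE.1 {c} (Finset.singleton_subset_iff.mpr hcE)
          rw [hloc c hc1 C hC hcC, ← hloc c hc1 E hE hcE, h1]
    -- a maximal face
    obtain ⟨C, hCm, hCc⟩ := sup_attained hΓ.1
    have hCf : IsFacet Γ C := by
      refine ⟨hCm, fun D hD hsub => ?_⟩
      exact (Finset.eq_of_subset_of_card_le hsub (by rw [hCc]; exact facet_card_le hD)).symm
    have hCne : C.Nonempty := by
      rw [← Finset.card_pos, hCc, hn]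
      omega
    obtain ⟨w, hwC⟩ := hCne
    have hw : ({w} : Finset α) ∈ Γ := hΓ.2 C hCm {w} (Finset.singleton_subset_iff.mpr hwC)
    have := hkey w (hconn w hw) C hCf hwC
    omega

/-! ### shedding vertices, purity of deletion -/

lemma vd_nonempty : ∀ {Γ : Finset (Finset α)}, VertexDecomposable Γ → Γ.Nonempty := by
  intro Γ h
  induction h with
  | simplex A => exact ⟨∅, Finset.mem_powerset.mpr (Finset.empty_subset A)⟩
  | shed Δ v hshed hdel hlink ihdel ihlink =>
      obtain ⟨G, hG⟩ := ihlink
      exact ⟨G, (Finset.mem_filter.mp hG).1⟩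

lemma vertex_mem_of_link_nonempty {v : α} (hΔ : IsComplex Δ)
    (h : (link Δ {v}).Nonempty) : ({v} : Finset α) ∈ Δ := by
  obtain ⟨G, hG⟩ := h
  rw [mem_link] at hG
  exact hΔ.2 _ hG.2.2 {v} (Finset.subset_union_right)

lemma del_sup_pure {v : α} (hΔ : IsComplex Δ) (hp : Pure Δ)
    (hshed : ∀ A ∈ Δ, v ∈ A → ∃ w, w ≠ v ∧ w ∉ A ∧ insert w (A.erase v) ∈ Δ) :
    (del Δ v).sup Finset.card = Δ.sup Finset.card ∧ Pure (del Δ v) := by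
  have hsub : del Δ v ⊆ Δ := Finset.filter_subset _ _
  have hle : (del Δ v).sup Finset.card ≤ Δ.sup Finset.card := Finset.sup_mono hsub
  obtain ⟨B, hBf, _⟩ := exists_facet_above (empty_mem hΔ)
  have hBc := hp _ hBf
  have hexists : ∃ C, C ∈ del Δ v ∧ C.card = Δ.sup Finset.card := by
    by_cases hvB : v ∈ B
    · obtain ⟨w, hwv, hwB, hC⟩ := hshed B hBf.1 hvB
      refine ⟨insert w (B.erase v), mem_del.mpr ⟨hC, ?_⟩, ?_⟩
      · intro h
        rcases Finset.mem_insert.mp h with h' | h'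
        · exact hwv h'.symm
        · exact notMem_erase v B h'
      · have hwB' : w ∉ B.erase v := fun h => hwB (Finset.mem_of_mem_erase h)
        rw [Finset.card_insert_of_notMem hwB', Finset.card_erase_of_mem hvB]
        have h1 : 1 ≤ B.card := Finset.card_pos.mpr ⟨v, hvB⟩
        omega
    · exact ⟨B, mem_del.mpr ⟨hBf.1, hvB⟩, hBc⟩
  obtain ⟨C, hCd, hCc⟩ := hexists
  have hsup : (del Δ v).sup Finset.card = Δ.sup Finset.card :=
    le_antisymm hle (hCc ▸ facet_card_le hCd)
  refine ⟨hsup, fun G hG => ?_⟩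
  rw [hsup]
  have hGΔ : G ∈ Δ := hsub hG.1
  have hvG : v ∉ G := (mem_del.mp hG.1).2
  obtain ⟨E, hEf, hGE⟩ := exists_facet_above hGΔ
  by_cases hvE : v ∈ E
  · exfalso
    obtain ⟨w, hwv, hwE, hCE⟩ := hshed E hEf.1 hvE
    have hGsub : G ⊆ E.erase v := fun x hx =>
      Finset.mem_erase.mpr ⟨fun h => hvG (h ▸ hx), hGE hx⟩
    have h1 : E.erase v ∈ del Δ v :=
      mem_del.mpr ⟨hΔ.2 E hEf.1 _ (Finset.erase_subset v E), notMem_erase v E⟩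
    have hGeq := hG.2 _ h1 hGsub
    have h2 : insert w (E.erase v) ∈ del Δ v := by
      refine mem_del.mpr ⟨hCE, fun h => ?_⟩
      rcases Finset.mem_insert.mp h with h' | h'
      · exact hwv h'.symm
      · exact notMem_erase v E h'
    have h3 := hG.2 _ h2 (hGeq ▸ Finset.subset_insert w (E.erase v))
    have hwG : w ∈ G := by
      rw [← h3]
      exact Finset.mem_insert_self w _
    rw [← hGeq] at hwG
    exact hwE (Finset.mem_of_mem_erase hwG)
  · have hE : E ∈ del Δ v := mem_del.mpr ⟨hEf.1, hvE⟩
    have := hG.2 E hE hGE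
    rw [← this]
    exact hp E hEf

lemma link_del_eq {v : α} {A : Finset α} (hΔ : IsComplex Δ) (hvA : v ∉ A)
    (hins : insert v A ∉ Δ) : link Δ A = link (del Δ v) A := by
  ext G
  rw [mem_link, mem_link, mem_del, mem_del]
  constructor
  · rintro ⟨hG, hd, hu⟩
    have hvG : v ∉ G := by
      intro hvG
      exact hins (hΔ.2 _ hu _ (Finset.insert_subset (Finset.mem_union_left _ hvG)
        (Finset.subset_union_right)))
    exact ⟨⟨hG, hvG⟩, hd, hu, fun h => (Finset.mem_union.mp h).elim hvG hvA⟩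
  · rintro ⟨⟨hG, _⟩, hd, hu, _⟩
    exact ⟨hG, hd, hu⟩

lemma union_erase_insert {v : α} {B A : Finset α} (hvB : v ∈ B) :
    B.erase v ∪ insert v A = B ∪ A := by
  ext z
  by_cases hz : z = v
  · subst hz
    simp [hvB]
  · simp only [Finset.mem_union, Finset.mem_erase, Finset.mem_insert]
    constructor
    · rintro (⟨_, h⟩ | (h | h))
      · exact Or.inl h
      · exact absurd h hz
      · exact Or.inr h
    · rintro (h | h)
      · exact Or.inl ⟨hz, h⟩
      · exact Or.inr (Or.inr h)

lemma union_insert_swap {v : α} {C A : Finset α} :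
    insert v C ∪ A = C ∪ insert v A := by
  ext z
  simp only [Finset.mem_union, Finset.mem_insert]
  tauto


lemma union_singleton' (s : Finset α) (a : α) : s ∪ {a} = insert a s := by
  ext z
  simp [Finset.mem_union, Finset.mem_insert, or_comm]

lemma singleton_union' (a : α) (s : Finset α) : ({a} : Finset α) ∪ s = insert a s := by
  ext z
  simp [Finset.mem_union, Finset.mem_insert]

/-! ### pure vertex-decomposable complexes are CM -/

theorem pure_vd_cm : ∀ Δ : Finset (Finset α), VertexDecomposable Δ →
    IsComplex Δ → Pure Δ → IsCM F Δ := by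
  intro Δ hvd
  induction hvd with
  | simplex A => exact fun _ _ => cm_powerset F A
  | shed Δ v hshed hdel hlink ihdel ihlink =>
    intro hΔ hp
    have hv : ({v} : Finset α) ∈ Δ := vertex_mem_of_link_nonempty hΔ (vd_nonempty hlink)
    have hcdel : IsComplex (del Δ v) := complex_del hΔ v
    have hclink : IsComplex (link Δ {v}) := complex_link hΔ hv
    obtain ⟨hsupdel, hpdel⟩ := del_sup_pure hΔ hp hshed
    have hplink : Pure (link Δ {v}) := pure_link hΔ hp hv
    have hcmdel : IsCM F (del Δ v) := ihdel hcdel hpdel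
    have hcmlink : IsCM F (link Δ {v}) := ihlink hclink hplink
    intro A hA i hi
    have hdim : dimC (link Δ A) = ((Δ.sup Finset.card : ℕ) : ℤ) - (A.card : ℕ) - 1 :=
      dim_link hΔ hp hA
    by_cases hvA : v ∈ A
    · -- face contains v : use the link
      have hd : Disjoint (A.erase v) ({v} : Finset α) :=
        Finset.disjoint_singleton_right.mpr (notMem_erase v A)
      have hmem : A.erase v ∈ link Δ {v} := mem_link.mpr
        ⟨hΔ.2 A hA _ (Finset.erase_subset v A), hd, by
          rw [union_singleton' _ _, Finset.insert_erase hvA]; exact hA⟩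
      have heq : link Δ A = link (link Δ {v}) (A.erase v) := by
        rw [link_link hΔ hd, singleton_union' _ _, Finset.insert_erase hvA]
      rw [heq] at hi ⊢
      exact hcmlink _ hmem i hi
    · by_cases hins : insert v A ∈ Δ
      · -- the Mayer-Vietoris case
        intro x hx hbd
        classical
        have hAdel : A ∈ del Δ v := mem_del.mpr ⟨hA, hvA⟩
        set xa := x.filter (fun B => v ∈ B) with hxa
        set xb := x.filter (fun B => ¬ v ∈ B) with hxb
        have hxab : xa + xb = x := Finsupp.filter_pos_add_filter_neg x _
        have hsa : ∀ B ∈ xa.support, v ∈ B := by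
          intro B hB
          rw [hxa, Finsupp.support_filter, Finset.mem_filter] at hB
          exact hB.2
        have hsb : ∀ B ∈ xb.support, v ∉ B := by
          intro B hB
          rw [hxb, Finsupp.support_filter, Finset.mem_filter] at hB
          exact hB.2
        have hsax : xa.support ⊆ x.support := by
          rw [hxa, Finsupp.support_filter]
          exact Finset.filter_subset _ _
        have hsbx : xb.support ⊆ x.support := by
          rw [hxb, Finsupp.support_filter]
          exact Finset.filter_subset _ _
        set x1 := dropMap F v xa with hx1
        have hconex1 : coneMap F v x1 = xa := cone_drop_vfull F v xa hsa
        -- support of x1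
        have hx1supp : ∀ C ∈ x1.support, C ∈ link Δ (insert v A) ∧ (C.card : ℤ) = (i-1) + 1 := by
          intro C hC
          obtain ⟨B, hB, hvB, rfl⟩ := support_drop F v xa C hC
          obtain ⟨hBL, hBc⟩ := hx B (hsax hB)
          rw [mem_link] at hBL
          obtain ⟨hBΔ, hBd, hBu⟩ := hBL
          constructor
          · rw [mem_link]
            refine ⟨hΔ.2 B hBΔ _ (Finset.erase_subset v B), ?_, ?_⟩
            · rw [Finset.disjoint_insert_right]
              exact ⟨notMem_erase v B,
                disjoint_of_subset_left (Finset.erase_subset v B) hBd⟩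
            · rw [union_erase_insert hvB]
              exact hBu
          · rw [Finset.card_erase_of_mem hvB]
            have h1 : 1 ≤ B.card := Finset.card_pos.mpr ⟨v, hvB⟩
            push_cast
            omega
        have hx1free : ∀ C ∈ x1.support, v ∉ C := by
          intro C hC
          obtain ⟨B, _, _, rfl⟩ := support_drop F v xa C hC
          exact notMem_erase v B
        have hbdx1free : ∀ C ∈ (bd F x1).support, v ∉ C := by
          intro C hC
          obtain ⟨A', hA', a, _, rfl⟩ := support_bd F x1 C hC
          exact fun h => hx1free A' hA' (Finset.mem_of_mem_erase h)
        have hbdxbfree : ∀ C ∈ (bd F xb).support, v ∉ C := by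
          intro C hC
          obtain ⟨A', hA', a, _, rfl⟩ := support_bd F xb C hC
          exact fun h => hsb A' hA' (Finset.mem_of_mem_erase h)
        -- boundary of x1 vanishes
        have h0 : bd F (coneMap F v x1) + bd F xb = 0 := by
          rw [← map_add]
          rw [show coneMap F v x1 + xb = x by rw [hconex1]; exact hxab]
          exact hbd
        have h1 : bd F (coneMap F v x1) = x1 - coneMap F v (bd F x1) :=
          eq_sub_of_add_eq (bd_cone F v x1)
        rw [h1] at h0
        have h2 := congrArg (dropMap F v) h0
        rw [map_add, map_sub, drop_vfree F v x1 hx1free,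
          drop_cone_vfree F v (bd F x1) hbdx1free,
          drop_vfree F v (bd F xb) hbdxbfree, map_zero, zero_sub, add_zero,
          neg_eq_zero] at h2
        -- h2 : bd F x1 = 0
        have h3 : bd F xb = - x1 := by
          rw [h2, map_zero, sub_zero] at h0
          exact eq_neg_of_add_eq_zero_right h0
        -- homology of the link of insert v A
        have hiA : insert v A ∈ Δ := hins
        have hdA : Disjoint A ({v} : Finset α) := Finset.disjoint_singleton_right.mpr hvA
        have hmemA : A ∈ link Δ {v} := mem_link.mpr ⟨hA, hdA, by
          rw [union_singleton' _ _]; exact hins⟩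
        have heqA : link (link Δ {v}) A = link Δ (insert v A) := by
          rw [link_link hΔ hdA, singleton_union' _ _]
        have hcardvA : (insert v A).card = A.card + 1 := Finset.card_insert_of_notMem hvA
        have hdim2 : dimC (link Δ (insert v A)) =
            ((Δ.sup Finset.card : ℕ) : ℤ) - (A.card : ℕ) - 2 := by
          rw [dim_link hΔ hp hins, hcardvA]
          push_cast
          ring
        have hhv1 : HomologyVanishes F (link Δ (insert v A)) (i-1) := by
          have := hcmlink A hmemA (i-1) (by rw [heqA, hdim2]; rw [hdim] at hi; omega)
          rwa [heqA] at this
        obtain ⟨w1, hw1supp, hw1bd⟩ := hhv1 x1 hx1supp h2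
        -- the cycle z in link (del Δ v) A
        set z := xb + w1 with hz
        have hzsupp : ∀ C ∈ z.support, C ∈ link (del Δ v) A ∧ (C.card : ℤ) = i + 1 := by
          intro C hC
          have := Finsupp.support_add hC
          rw [Finset.mem_union] at this
          rcases this with h | h
          · obtain ⟨hCL, hCc⟩ := hx C (hsbx h)
            rw [mem_link] at hCL
            obtain ⟨hCΔ, hCd, hCu⟩ := hCL
            have hvC := hsb C h
            refine ⟨mem_link.mpr ⟨mem_del.mpr ⟨hCΔ, hvC⟩, hCd, mem_del.mpr ⟨hCu, ?_⟩⟩, hCc⟩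
            exact fun hm => (Finset.mem_union.mp hm).elim hvC hvA
          · obtain ⟨hCL, hCc⟩ := hw1supp C h
            rw [mem_link] at hCL
            obtain ⟨hCΔ, hCd, hCu⟩ := hCL
            have hvC : v ∉ C := fun hm =>
              (Finset.disjoint_left.mp hCd) hm (Finset.mem_insert_self v A)
            have hCdA : Disjoint C A :=
              disjoint_of_subset_right (Finset.subset_insert v A) hCd
            refine ⟨mem_link.mpr ⟨mem_del.mpr ⟨hCΔ, hvC⟩, hCdA, mem_del.mpr ⟨?_, ?_⟩⟩, by omega⟩
            · exact hΔ.2 _ hCu _ (Finset.union_subset_union_right (Finset.subset_insert v A))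
            · exact fun hm => (Finset.mem_union.mp hm).elim hvC hvA
        have hzbd : bd F z = 0 := by
          rw [hz, map_add, h3, hw1bd]
          abel
        have hdim3 : dimC (link (del Δ v) A) =
            ((Δ.sup Finset.card : ℕ) : ℤ) - (A.card : ℕ) - 1 := by
          rw [dim_link hcdel hpdel hAdel, hsupdel]
        have hhv0 : HomologyVanishes F (link (del Δ v) A) i :=
          hcmdel A hAdel i (by rw [hdim3]; rw [hdim] at hi; omega)
        obtain ⟨y0, hy0supp, hy0bd⟩ := hhv0 z hzsupp hzbd
        refine ⟨y0 - coneMap F v w1, ?_, ?_⟩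
        · intro C hC
          have := Finsupp.support_sub hC
          rw [Finset.mem_union] at this
          rcases this with h | h
          · obtain ⟨hCL, hCc⟩ := hy0supp C h
            rw [mem_link] at hCL
            obtain ⟨hCΔ, hCd, hCu⟩ := hCL
            exact ⟨mem_link.mpr ⟨(mem_del.mp hCΔ).1, hCd, (mem_del.mp hCu).1⟩, hCc⟩
          · obtain ⟨C', hC', hvC', rfl⟩ := support_cone F v w1 C h
            obtain ⟨hCL, hCc⟩ := hw1supp C' hC'
            rw [mem_link] at hCL
            obtain ⟨hCΔ, hCd, hCu⟩ := hCL
            have hCdA : Disjoint C' A :=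
              disjoint_of_subset_right (Finset.subset_insert v A) hCd
            constructor
            · rw [mem_link]
              refine ⟨hΔ.2 _ hCu _ ?_, ?_, ?_⟩
              · rw [← union_insert_swap]
                exact Finset.subset_union_left
              · rw [Finset.disjoint_insert_left]
                exact ⟨hvA, hCdA⟩
              · rw [union_insert_swap]
                exact hCu
            · rw [Finset.card_insert_of_notMem hvC']
              push_cast
              omega
        · have h4 : bd F (coneMap F v w1) = w1 - coneMap F v (bd F w1) :=
            eq_sub_of_add_eq (bd_cone F v w1)
          rw [map_sub, hy0bd, h4, hw1bd, hconex1, hz, ← hxab]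
          abel
      · -- v is not in the closed star of A : use the deletion
        rw [link_del_eq hΔ hvA hins] at hi ⊢
        exact hcmdel A (mem_del.mpr ⟨hA, hvA⟩) i hi

/-! ### skeleta of vertex-decomposable complexes -/

lemma skel_zero (hΔ : IsComplex Δ) :
    Δ.filter (fun A => A.card ≤ 0) = (∅ : Finset α).powerset := by
  ext B
  rw [Finset.mem_filter, Finset.mem_powerset, Finset.subset_empty]
  constructor
  · rintro ⟨_, hc⟩
    exact Finset.card_eq_zero.mp (Nat.le_zero.mp hc)
  · rintro rfl
    exact ⟨empty_mem hΔ, by simp⟩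

theorem simplex_skel : ∀ (n : ℕ) (A : Finset α), A.card = n → ∀ k : ℕ,
    VertexDecomposable (A.powerset.filter (fun B => B.card ≤ k)) := by
  intro n
  induction n using Nat.strong_induction_on with
  | _ n IH =>
  intro A hN k
  have hpc : IsComplex A.powerset := by
    refine ⟨⟨∅, Finset.mem_powerset.mpr (Finset.empty_subset A)⟩, ?_⟩
    intro C hC B hB
    rw [Finset.mem_powerset] at *
    exact hB.trans hC
  rcases Nat.eq_zero_or_pos k with rfl | hk
  · rw [skel_zero hpc]
    exact VertexDecomposable.simplex ∅
  by_cases hAk : A.card ≤ k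
  · have : A.powerset.filter (fun B => B.card ≤ k) = A.powerset := by
      refine Finset.filter_true_of_mem fun B hB => ?_
      exact le_trans (Finset.card_le_card (Finset.mem_powerset.mp hB)) hAk
    rw [this]
    exact VertexDecomposable.simplex A
  · push_neg at hAk
    have hAne : A.Nonempty := Finset.card_pos.mp (lt_of_le_of_lt (Nat.zero_le k) hAk)
    obtain ⟨v, hvA⟩ := hAne
    refine VertexDecomposable.shed _ v ?_ ?_ ?_
    · intro B hB hvB
      rw [Finset.mem_filter, Finset.mem_powerset] at hB
      have hBA : (A \ B).Nonempty := by
        rw [← Finset.card_pos, Finset.card_sdiff_of_subset hB.1]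
        have := hB.2
        omega
      obtain ⟨w, hw⟩ := hBA
      rw [Finset.mem_sdiff] at hw
      refine ⟨w, fun h => hw.2 (h ▸ hvB), hw.2, ?_⟩
      rw [Finset.mem_filter, Finset.mem_powerset]
      constructor
      · exact Finset.insert_subset hw.1 ((Finset.erase_subset v B).trans hB.1)
      · have hwB : w ∉ B.erase v := fun h => hw.2 (Finset.mem_of_mem_erase h)
        rw [Finset.card_insert_of_notMem hwB, Finset.card_erase_of_mem hvB]
        have : 1 ≤ B.card := Finset.card_pos.mpr ⟨v, hvB⟩
        omega
    · have heq : del (A.powerset.filter (fun B => B.card ≤ k)) v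
          = (A.erase v).powerset.filter (fun B => B.card ≤ k) := by
        ext B
        rw [mem_del, Finset.mem_filter, Finset.mem_filter, Finset.mem_powerset,
          Finset.mem_powerset, Finset.subset_erase]
        tauto
      rw [heq]
      exact IH (A.erase v).card (by rw [Finset.card_erase_of_mem hvA]; omega) (A.erase v) rfl k
    · have heq : link (A.powerset.filter (fun B => B.card ≤ k)) {v}
          = (A.erase v).powerset.filter (fun B => B.card ≤ k - 1) := by
        ext B
        rw [mem_link, Finset.mem_filter, Finset.mem_filter, Finset.mem_filter,
          Finset.mem_powerset, Finset.mem_powerset, Finset.mem_powerset,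
          Finset.disjoint_singleton_right, union_singleton' B v, Finset.subset_erase]
        constructor
        · rintro ⟨⟨hBA, hBk⟩, hvB, hins, hck⟩
          rw [Finset.card_insert_of_notMem hvB] at hck
          exact ⟨⟨hBA, hvB⟩, by omega⟩
        · rintro ⟨⟨hBA, hvB⟩, hck⟩
          refine ⟨⟨hBA, by omega⟩, hvB, Finset.insert_subset hvA hBA, ?_⟩
          rw [Finset.card_insert_of_notMem hvB]
          omega
      rw [heq]
      exact IH (A.erase v).card (by rw [Finset.card_erase_of_mem hvA]; omega) (A.erase v) rfl (k - 1)

theorem vd_skel : ∀ Γ : Finset (Finset α), VertexDecomposable Γ → IsComplex Γ →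
    ∀ k : ℕ, VertexDecomposable (Γ.filter (fun A => A.card ≤ k)) := by
  intro Γ h
  induction h with
  | simplex A => exact fun _ k => simplex_skel A.card A rfl k
  | shed Δ v hshed hdel hlink ihdel ihlink =>
    intro hΔ k
    rcases Nat.eq_zero_or_pos k with rfl | hk
    · rw [skel_zero hΔ]
      exact VertexDecomposable.simplex ∅
    have hv : ({v} : Finset α) ∈ Δ := vertex_mem_of_link_nonempty hΔ (vd_nonempty hlink)
    refine VertexDecomposable.shed _ v ?_ ?_ ?_
    · intro B hB hvB
      rw [Finset.mem_filter] at hB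
      obtain ⟨w, hwv, hwB, hC⟩ := hshed B hB.1 hvB
      refine ⟨w, hwv, hwB, ?_⟩
      rw [Finset.mem_filter]
      refine ⟨hC, ?_⟩
      have hwB' : w ∉ B.erase v := fun h => hwB (Finset.mem_of_mem_erase h)
      rw [Finset.card_insert_of_notMem hwB', Finset.card_erase_of_mem hvB]
      have : 1 ≤ B.card := Finset.card_pos.mpr ⟨v, hvB⟩
      omega
    · have heq : del (Δ.filter (fun A => A.card ≤ k)) v
          = (del Δ v).filter (fun A => A.card ≤ k) := by
        ext B
        rw [mem_del, Finset.mem_filter, Finset.mem_filter, mem_del]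
        tauto
      rw [heq]
      exact ihdel (complex_del hΔ v) k
    · have heq : link (Δ.filter (fun A => A.card ≤ k)) {v}
          = (link Δ {v}).filter (fun A => A.card ≤ k - 1) := by
        ext B
        rw [mem_link, Finset.mem_filter, Finset.mem_filter, Finset.mem_filter,
          mem_link, Finset.disjoint_singleton_right, union_singleton' B v]
        constructor
        · rintro ⟨⟨hBΔ, hBk⟩, hvB, hins, hck⟩
          rw [Finset.card_insert_of_notMem hvB] at hck
          exact ⟨⟨hBΔ, hvB, hins⟩, by omega⟩
        · rintro ⟨⟨hBΔ, hvB, hins⟩, hck⟩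
          refine ⟨⟨hBΔ, by omega⟩, hvB, hins, ?_⟩
          rw [Finset.card_insert_of_notMem hvB]
          omega
      rw [heq]
      exact ihlink (complex_link hΔ hv) (k - 1)

end VDaux

open VDaux

/-- **Vertex-decomposable complexes have facet depth.** If `Δ` is
vertex-decomposable, then every facet of `Δ` has dimension at least the depth
of `Δ`; in fact the depth of `Δ` (over any field) equals the minimum dimension
of a facet of `Δ`. -/
theorem vertexDecomposable_facet_depth {α : Type} [LinearOrder α]
    (Δ : Finset (Finset α)) (hΔ : IsComplex Δ) (hvd : VertexDecomposable Δ)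
    (F : Type) [Field F] :
    (∀ A, IsFacet Δ A → depthC F Δ ≤ (A.card : ℤ) - 1) ∧
    (∃ A, IsFacet Δ A ∧ depthC F Δ = (A.card : ℤ) - 1) := by
  classical
  obtain ⟨B₁, hB₁, _⟩ := exists_facet_above (empty_mem hΔ)
  have hfacets : (Δ.filter fun A => IsFacet Δ A).Nonempty :=
    ⟨B₁, Finset.mem_filter.mpr ⟨hB₁.1, hB₁⟩⟩
  obtain ⟨A₀, hA₀m, hA₀min⟩ := Finset.exists_min_image _ Finset.card hfacets
  rw [Finset.mem_filter] at hA₀m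
  have hA₀f : IsFacet Δ A₀ := hA₀m.2
  set m := A₀.card with hm
  set S := {d : ℤ | d ≤ dimC Δ ∧ IsCM F (skeleton Δ d)} with hS
  have hdepth : depthC F Δ = sSup S := rfl
  have claim_le : ∀ d ∈ S, ∀ A, IsFacet Δ A → d ≤ (A.card : ℤ) - 1 := by
    intro d hd A hAf
    obtain ⟨hdle, hdcm⟩ := hd
    by_contra hcon
    push_neg at hcon
    have hd0 : (0 : ℤ) ≤ d := by
      have : (0 : ℤ) ≤ (A.card : ℤ) := Int.natCast_nonneg _
      omega
    set k := d.toNat with hk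
    have hdk : (k : ℤ) = d := Int.toNat_of_nonneg hd0
    set Γ := Δ.filter (fun B => B.card ≤ k + 1) with hΓdef
    have hΓeq : skeleton Δ d = Γ := by
      ext B
      rw [skeleton, Finset.mem_filter, hΓdef, Finset.mem_filter]
      constructor <;> rintro ⟨h1, h2⟩ <;> exact ⟨h1, by omega⟩
    have hΓc : IsComplex Γ := by
      refine ⟨⟨∅, Finset.mem_filter.mpr ⟨empty_mem hΔ, by simp⟩⟩, ?_⟩
      intro C hC B hB
      rw [Finset.mem_filter] at hC ⊢
      exact ⟨hΔ.2 C hC.1 B hB, le_trans (Finset.card_le_card hB) hC.2⟩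
    have hcard : A.card ≤ k := by omega
    have hAΓ : A ∈ Γ := Finset.mem_filter.mpr ⟨hAf.1, by omega⟩
    have hAfΓ : IsFacet Γ A :=
      ⟨hAΓ, fun B hB hsub => hAf.2 B (Finset.mem_filter.mp hB).1 hsub⟩
    have hsupΓ : Γ.sup Finset.card = k + 1 := by
      apply le_antisymm
      · exact Finset.sup_le fun B hB => (Finset.mem_filter.mp hB).2
      · have h1 : k + 1 ≤ Δ.sup Finset.card := by
          rw [dimC] at hdle
          omega
        obtain ⟨D, hD, hDc⟩ := sup_attained hΔ.1
        obtain ⟨D', hD', hD'c⟩ := Finset.exists_subset_card_eq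
          (show k + 1 ≤ D.card by omega)
        have hmem : D' ∈ Γ := Finset.mem_filter.mpr ⟨hΔ.2 D hD D' hD', by omega⟩
        calc k + 1 = D'.card := hD'c.symm
          _ ≤ _ := facet_card_le hmem
    have hfin := cm_pure F (k + 1) Γ hsupΓ hΓc (hΓeq ▸ hdcm) A hAfΓ
    rw [hsupΓ] at hfin
    omega
  have claim_mem : ((m : ℤ) - 1) ∈ S := by
    constructor
    · rw [dimC]
      have : m ≤ Δ.sup Finset.card := facet_card_le hA₀f.1
      omega
    · set Γ := Δ.filter (fun B => B.card ≤ m) with hΓdef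
      have hΓeq : skeleton Δ ((m : ℤ) - 1) = Γ := by
        ext B
        rw [skeleton, Finset.mem_filter, hΓdef, Finset.mem_filter]
        constructor <;> rintro ⟨h1, h2⟩ <;> exact ⟨h1, by omega⟩
      rw [hΓeq]
      have hΓc : IsComplex Γ := by
        refine ⟨⟨∅, Finset.mem_filter.mpr ⟨empty_mem hΔ, by simp⟩⟩, ?_⟩
        intro C hC B hB
        rw [Finset.mem_filter] at hC ⊢
        exact ⟨hΔ.2 C hC.1 B hB, le_trans (Finset.card_le_card hB) hC.2⟩
      have hvdΓ : VertexDecomposable Γ := vd_skel Δ hvd hΔ m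
      have hA₀Γ : A₀ ∈ Γ := Finset.mem_filter.mpr ⟨hA₀f.1, le_refl m⟩
      have hsupΓ : Γ.sup Finset.card = m := by
        apply le_antisymm
        · exact Finset.sup_le fun B hB => (Finset.mem_filter.mp hB).2
        · exact facet_card_le hA₀Γ
      have hpure : Pure Γ := by
        intro G hG
        rw [hsupΓ]
        have hGΔ : G ∈ Δ := (Finset.mem_filter.mp hG.1).1
        have hGm : G.card ≤ m := (Finset.mem_filter.mp hG.1).2
        obtain ⟨E, hEf, hGE⟩ := exists_facet_above hGΔ
        have hEm : m ≤ E.card := hA₀min E (Finset.mem_filter.mpr ⟨hEf.1, hEf⟩)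
        by_contra hne
        have hlt : G.card < m := lt_of_le_of_ne hGm hne
        have hEG : (E \ G).Nonempty := by
          rw [← Finset.card_pos, Finset.card_sdiff_of_subset hGE]
          omega
        obtain ⟨b, hb⟩ := hEG
        rw [Finset.mem_sdiff] at hb
        have hins : insert b G ∈ Γ := Finset.mem_filter.mpr
          ⟨hΔ.2 E hEf.1 _ (Finset.insert_subset hb.1 hGE), by
            rw [Finset.card_insert_of_notMem hb.2]; omega⟩
        have := hG.2 _ hins (Finset.subset_insert b G)
        exact hb.2 (this ▸ Finset.mem_insert_self b G)
      exact pure_vd_cm F Γ hvdΓ hΓc hpure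
  have hSne : S.Nonempty := ⟨_, claim_mem⟩
  have hSbdd : BddAbove S := ⟨dimC Δ, fun d hd => hd.1⟩
  constructor
  · intro A hAf
    rw [hdepth]
    exact csSup_le hSne (fun d hd => claim_le d hd A hAf)
  · refine ⟨A₀, hA₀f, ?_⟩
    rw [hdepth]
    exact le_antisymm (csSup_le hSne fun d hd => claim_le d hd A₀ hA₀f)
      (le_csSup hSbdd claim_mem)
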